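/- If N is a b-wMRH number with k base-b digits and multiplicative extra term A ≥ 1, then k ≤ A + 4 if b ≥ 6, and k ≤ A + 5 if 2 ≤ b ≤ 5. Consequently, for fixed b and A, the set of b-wMRH numbers with extra term A is finite. -/

import Mathlib

/-- Sum of the base-`b` digits of `N`. -/
def sumDigits (b N : ℕ) : ℕ := (Nat.digits b N).sum

/-- The base-`b` reversal of `N`. -/
def revDigits (b N : ℕ) : ℕ := Nat.ofDigits b (Nat.digits b N).reverse

/-- `N` is a `b`-wMRH number with multiplicative extra term `A`. -/
def IsWMRHWith (b N A : ℕ) : Prop :=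
  N = (A + sumDigits b N) * revDigits b (A + sumDigits b N)

lemma sum_le_aux (b N : ℕ) (hb : 2 ≤ b) :
    sumDigits b N + (Nat.digits b N).length ≤ b * (Nat.digits b N).length := by
  have h1 : sumDigits b N ≤ (Nat.digits b N).length * (b - 1) := by
    simpa [smul_eq_mul, sumDigits] using
      List.sum_le_card_nsmul (Nat.digits b N) (b - 1)
        (fun x hx => by have := Nat.digits_lt_base hb hx; omega)
  have h2 : (Nat.digits b N).length * (b - 1) + (Nat.digits b N).length
      = (Nat.digits b N).length * b := by
    obtain ⟨b', rfl⟩ : ∃ b', b = b' + 1 := ⟨b - 1, by omega⟩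
    simp [Nat.mul_succ]
  have h3 : (Nat.digits b N).length * b = b * (Nat.digits b N).length := Nat.mul_comm _ _
  omega

lemma core (b N A j : ℕ) (hb : 2 ≤ b) (hA : 1 ≤ A) (h : IsWMRHWith b N A)
    (hk : (Nat.digits b N).length = j + 2)
    (hlt : (A + sumDigits b N) ^ 2 < b ^ j) : False := by
  have hb1 : 1 < b := hb
  have hN0 : N ≠ 0 := by
    intro h0; rw [h0] at hk; simp at hk
  have hbN : b ^ (j + 2) ≤ b * N := by
    rw [← hk]; exact Nat.base_pow_length_digits_le b N hb1 hN0
  set M := A + sumDigits b N with hM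
  have hM0 : 0 < M := by omega
  have hrev : revDigits b M < b ^ (Nat.digits b M).length := by
    have h1 : ∀ x ∈ (Nat.digits b M).reverse, x < b :=
      fun x hx => Nat.digits_lt_base hb1 (List.mem_reverse.mp hx)
    have := Nat.ofDigits_lt_base_pow_length hb1 h1
    simpa [revDigits] using this
  have hMb : b ^ (Nat.digits b M).length ≤ b * M :=
    Nat.base_pow_length_digits_le b M hb1 (by omega)
  have h1 : revDigits b M < b * M := lt_of_lt_of_le hrev hMb
  have hNe : N = M * revDigits b M := h
  have h2 : N < b * M ^ 2 := by
    rw [hNe]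
    calc M * revDigits b M < M * (b * M) := by
          exact Nat.mul_lt_mul_of_le_of_lt (le_refl M) h1 hM0
      _ = b * M ^ 2 := by ring
  have h3 : b * M ^ 2 ≤ b * b ^ j := Nat.mul_le_mul_left b hlt.le
  have h4 : N < b ^ (j + 1) := by
    have : b * b ^ j = b ^ (j + 1) := by ring
    omega
  have h5 : b * N < b * b ^ (j + 1) :=
    Nat.mul_lt_mul_of_le_of_lt (le_refl b) h4 (by omega)
  have h6 : b * b ^ (j + 1) = b ^ (j + 2) := by ring
  omega

/-- Arithmetic estimate for `b ≥ 6`. -/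
lemma arith6 (b : ℕ) (hb : 6 ≤ b) :
    ∀ j u : ℕ, u + 5 = b * (j + 6) → u ^ 2 < b ^ (j + 4) := by
  intro j
  induction j with
  | zero =>
      intro u hu
      have h36 : 36 ≤ b * b := Nat.mul_le_mul hb hb
      have h4 : b ^ (0 + 4) = (b * b) * (b * b) := by ring
      rw [h4]
      nlinarith [hu, h36, Nat.mul_le_mul hb hb]
  | succ i ih =>
      intro u hu
      have hub : b ≤ u := by nlinarith
      set v := u - b with hv
      have hvu : v + b = u := Nat.sub_add_cancel hub
      have hv5 : v + 5 = b * (i + 6) := by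
        have e : b * (i + 1 + 6) = b * (i + 6) + b := by ring
        omega
      have ihv : v ^ 2 < b ^ (i + 4) := ih v hv5
      have hbv : b ≤ v := by nlinarith
      have key : (v + b) ^ 2 ≤ b * v ^ 2 := by
        have h1 : b * b ≤ v * v := Nat.mul_le_mul hbv hbv
        have h2 : v * b ≤ v * v := Nat.mul_le_mul_left v hbv
        nlinarith
      calc u ^ 2 = (v + b) ^ 2 := by rw [hvu]
        _ ≤ b * v ^ 2 := key
        _ < b * b ^ (i + 4) := by
            exact Nat.mul_lt_mul_of_le_of_lt (le_refl b) ihv (by omega)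
        _ = b ^ (i + 1 + 4) := by ring

/-- Arithmetic estimate for `3 ≤ b ≤ 5`. -/
lemma arith35 (b : ℕ) (hb : 3 ≤ b) (hb5 : b ≤ 5) :
    ∀ j u : ℕ, u + 6 = b * (j + 7) → u ^ 2 < b ^ (j + 5) := by
  intro j
  induction j with
  | zero =>
      intro u hu
      rcases (by omega : b = 3 ∨ b = 4 ∨ b = 5) with rfl | rfl | rfl
      · have : u = 15 := by omega
        subst this; norm_num
      · have : u = 22 := by omega
        subst this; norm_num
      · have : u = 29 := by omega
        subst this; norm_num
  | succ i ih =>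
      intro u hu
      have hub : b ≤ u := by nlinarith
      set v := u - b with hv
      have hvu : v + b = u := Nat.sub_add_cancel hub
      have hv6 : v + 6 = b * (i + 7) := by
        have e : b * (i + 1 + 7) = b * (i + 7) + b := by ring
        omega
      have ihv : v ^ 2 < b ^ (i + 5) := ih v hv6
      have hbv : 2 * b ≤ v := by nlinarith
      have key : (v + b) ^ 2 ≤ b * v ^ 2 := by
        have h1 : b * b ≤ v * v := by nlinarith
        have h2 : v * (2 * b) ≤ v * v := Nat.mul_le_mul_left v hbv
        nlinarith
      calc u ^ 2 = (v + b) ^ 2 := by rw [hvu]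
        _ ≤ b * v ^ 2 := key
        _ < b * b ^ (i + 5) := by
            exact Nat.mul_lt_mul_of_le_of_lt (le_refl b) ihv (by omega)
        _ = b ^ (i + 1 + 5) := by ring

/-- Arithmetic estimate for `b = 2`, `k ≥ 10`. -/
lemma arith2 : ∀ i : ℕ, (2 * i + 14) ^ 2 < 2 ^ (i + 8) := by
  intro i
  induction i with
  | zero => norm_num
  | succ n ih =>
      have key : (2 * (n + 1) + 14) ^ 2 ≤ 2 * (2 * n + 14) ^ 2 := by nlinarith [sq_nonneg n, n.zero_le]
      calc (2 * (n + 1) + 14) ^ 2 ≤ 2 * (2 * n + 14) ^ 2 := key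
        _ < 2 * 2 ^ (n + 8) := by omega
        _ = 2 ^ (n + 1 + 8) := by ring

theorem wMRH_digit_bound (b : ℕ) (hb : 2 ≤ b) :
    (∀ N A : ℕ, 1 ≤ A → IsWMRHWith b N A →
      ((6 ≤ b → (Nat.digits b N).length ≤ A + 4) ∧
       (b ≤ 5 → (Nat.digits b N).length ≤ A + 5))) ∧
    ∀ A : ℕ, 1 ≤ A → {N : ℕ | IsWMRHWith b N A}.Finite := by
  have hb1 : 1 < b := hb
  have main : ∀ N A : ℕ, 1 ≤ A → IsWMRHWith b N A →
      ((6 ≤ b → (Nat.digits b N).length ≤ A + 4) ∧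
       (b ≤ 5 → (Nat.digits b N).length ≤ A + 5)) := by
    intro N A hA h
    have hs := sum_le_aux b N hb
    constructor
    · intro hb6
      by_contra hcon
      push_neg at hcon
      -- now A + 5 ≤ (Nat.digits b N).length
      obtain ⟨j, hj⟩ : ∃ j, (Nat.digits b N).length = j + 6 :=
        ⟨(Nat.digits b N).length - 6, by omega⟩
      have h5 : 5 ≤ b * (j + 6) := by nlinarith
      set u := b * (j + 6) - 5 with hudef
      have hu : u + 5 = b * (j + 6) := Nat.sub_add_cancel h5
      have hA1 := arith6 b hb6 j u hu
      apply core b N A (j + 4) hb hA h (by omega)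
      have hAs : A + sumDigits b N ≤ u := by
        rw [hj] at hs hcon
        omega
      exact lt_of_le_of_lt (Nat.pow_le_pow_left hAs 2) hA1
    · intro hb5
      by_contra hcon
      push_neg at hcon
      -- now A + 6 ≤ (Nat.digits b N).length
      rcases (by omega : b = 2 ∨ 3 ≤ b) with rfl | hb3
      · -- base 2
        rcases le_or_gt 10 (Nat.digits 2 N).length with h10 | h9
        · obtain ⟨i, hi⟩ : ∃ i, (Nat.digits 2 N).length = i + 10 :=
            ⟨(Nat.digits 2 N).length - 10, by omega⟩
          apply core 2 N A (i + 8) (by norm_num) hA h (by omega)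
          have hAs : A + sumDigits 2 N ≤ 2 * i + 14 := by
            rw [hi] at hs hcon
            omega
          exact lt_of_le_of_lt (Nat.pow_le_pow_left hAs 2) (arith2 i)
        · -- length ∈ {7, 8, 9}
          have hN0 : N ≠ 0 := by
            intro h0; rw [h0] at hcon; simp at hcon
          have hbN : 2 ^ (Nat.digits 2 N).length ≤ 2 * N :=
            Nat.base_pow_length_digits_le 2 N one_lt_two hN0
          obtain ⟨m, hm⟩ : ∃ m, m = A + sumDigits 2 N := ⟨_, rfl⟩
          have hNe : N = m * revDigits 2 m := by rw [hm]; exact h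
          have hk3 : (Nat.digits 2 N).length = 7 ∨ (Nat.digits 2 N).length = 8 ∨
              (Nat.digits 2 N).length = 9 := by omega
          rcases hk3 with hk | hk | hk
          · have hm8 : m ≤ 8 := by rw [hk] at hs hcon; omega
            have hsmall : m * revDigits 2 m < 64 := by
              interval_cases m <;> norm_num [revDigits, Nat.ofDigits]
            rw [hk] at hbN
            norm_num at hbN
            omega
          · have hm10 : m ≤ 10 := by rw [hk] at hs hcon; omega
            have hsmall : m * revDigits 2 m < 128 := by
              interval_cases m <;> norm_num [revDigits, Nat.ofDigits]
            rw [hk] at hbN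
            norm_num at hbN
            omega
          · have hm12 : m ≤ 12 := by rw [hk] at hs hcon; omega
            have hsmall : m * revDigits 2 m < 256 := by
              interval_cases m <;> norm_num [revDigits, Nat.ofDigits]
            rw [hk] at hbN
            norm_num at hbN
            omega
      · -- 3 ≤ b ≤ 5
        obtain ⟨j, hj⟩ : ∃ j, (Nat.digits b N).length = j + 7 :=
          ⟨(Nat.digits b N).length - 7, by omega⟩
        have h6 : 6 ≤ b * (j + 7) := by nlinarith
        set u := b * (j + 7) - 6 with hudef
        have hu : u + 6 = b * (j + 7) := Nat.sub_add_cancel h6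
        have hA2 := arith35 b hb3 hb5 j u hu
        apply core b N A (j + 5) hb hA h (by omega)
        have hAs : A + sumDigits b N ≤ u := by
          rw [hj] at hs hcon
          omega
        exact lt_of_le_of_lt (Nat.pow_le_pow_left hAs 2) hA2
  refine ⟨main, ?_⟩
  intro A hA
  apply Set.Finite.subset (Set.finite_Iio (b ^ (A + 5)))
  intro N hN
  simp only [Set.mem_setOf_eq] at hN
  simp only [Set.mem_Iio]
  have hlen : (Nat.digits b N).length ≤ A + 5 := by
    have hm := main N A hA hN
    rcases le_or_gt 6 b with h6 | h5
    · exact (hm.1 h6).trans (by omega)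
    · exact hm.2 (by omega)
  calc N < b ^ (Nat.digits b N).length := Nat.lt_base_pow_length_digits hb1
    _ ≤ b ^ (A + 5) := Nat.pow_le_pow_right (by omega) hlen
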